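/- For every positive integer n, (k+1)^n = Σ_{i=0}^{n-1} A(n,i+1) · C(k+n-i, n) as polynomials in k, where A(n,i) denotes the Eulerian number and A(n,n+1) := 0. That is, the h*-vector of (k+1)^n has entries h*_i = A(n,i+1) for 0 ≤ i ≤ n. -/

import Mathlib

/-- Eulerian number `A(n,i) = Σ_{j=0}^{i} (-1)^j C(n+1,j) (i-j)^n`. -/
def eulerianA (n i : ℕ) : ℤ :=
  ∑ j ∈ Finset.range (i + 1), (-1 : ℤ) ^ j * ((n + 1).choose j : ℤ) * ((i - j : ℕ) : ℤ) ^ n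

/-- Auxiliary sum `W c p i = Σ_{j=0}^{i-1} (-1)^j C(c,j) (i-1-j)^p`. -/
private def W (c p i : ℕ) : ℤ :=
  ∑ j ∈ Finset.range i, (-1 : ℤ) ^ j * (c.choose j : ℤ) * ((i : ℤ) - 1 - j) ^ p

private lemma W_expand (c p i : ℕ) :
    W c p (i + 1) =
      ∑ j ∈ Finset.range i, (-1 : ℤ) ^ (j+1) * (c.choose (j+1) : ℤ) * ((i : ℤ) - 1 - j) ^ p
        + (i : ℤ) ^ p := by
  unfold W
  rw [Finset.sum_range_succ']
  congr 1
  · refine Finset.sum_congr rfl fun j _ => ?_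
    push_cast; ring
  · simp

private lemma K1 (c p i : ℕ) : W (c + 1) p (i + 1) = W c p (i + 1) - W c p i := by
  have key : (∑ j ∈ Finset.range i, (-1:ℤ)^(j+1) * (((c+1).choose (j+1)) : ℤ) * ((i:ℤ)-1-j)^p)
      = (∑ j ∈ Finset.range i, (-1:ℤ)^(j+1) * ((c.choose (j+1)) : ℤ) * ((i:ℤ)-1-j)^p)
        - ∑ j ∈ Finset.range i, (-1:ℤ)^j * ((c.choose j) : ℤ) * ((i:ℤ)-1-j)^p := by
    rw [← Finset.sum_sub_distrib]
    refine Finset.sum_congr rfl fun j _ => ?_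
    push_cast [Nat.choose_succ_succ]
    ring
  rw [W_expand, W_expand]
  unfold W
  rw [key]
  ring

private lemma K2 (c p i : ℕ) :
    W (c + 1) (p + 1) (i + 1) = (i : ℤ) * W (c + 1) p (i + 1) + ((c : ℤ) + 1) * W c p i := by
  have hmul : ∀ j : ℕ, ((c:ℤ)+1) * (c.choose j : ℤ) = ((j:ℤ)+1) * ((c+1).choose (j+1) : ℤ) := by
    intro j
    have h := Nat.add_one_mul_choose_eq c j
    have h2 : ((c + 1) * c.choose j : ℤ) = (((c+1).choose (j+1) : ℕ) : ℤ) * ((j:ℤ)+1) := by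
      exact_mod_cast congrArg (Nat.cast : ℕ → ℤ) h
    push_cast at h2 ⊢
    linarith
  have hW : ((c:ℤ)+1) * W c p i
      = ∑ j ∈ Finset.range i, (-1:ℤ)^j * (((j:ℤ)+1) * ((c+1).choose (j+1) : ℤ)) * ((i:ℤ) - 1 - j)^p := by
    unfold W
    rw [Finset.mul_sum]
    refine Finset.sum_congr rfl fun j _ => ?_
    rw [show (-1:ℤ)^j * (((j:ℤ)+1) * ((c+1).choose (j+1) : ℤ)) * ((i:ℤ) - 1 - j)^p
      = (((c:ℤ)+1) * (c.choose j : ℤ)) * ((-1:ℤ)^j * ((i:ℤ) - 1 - j)^p) from by rw [hmul]; ring]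
    ring
  have merge : (∑ j ∈ Finset.range i, (i:ℤ) * ((-1:ℤ)^(j+1) * (((c+1).choose (j+1)) : ℤ) * ((i:ℤ)-1-j)^p))
      + (∑ j ∈ Finset.range i, (-1:ℤ)^j * (((j:ℤ)+1) * (((c+1).choose (j+1)) : ℤ)) * ((i:ℤ)-1-j)^p)
      = ∑ j ∈ Finset.range i, (-1:ℤ)^(j+1) * (((c+1).choose (j+1)) : ℤ) * ((i:ℤ)-1-j)^(p+1) := by
    rw [← Finset.sum_add_distrib]
    refine Finset.sum_congr rfl fun j _ => ?_
    ring
  rw [W_expand, W_expand, hW, mul_add, Finset.mul_sum, add_right_comm, merge]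
  ring

private lemma eulerianA_eq_W (n i : ℕ) : eulerianA n i = W (n + 1) n (i + 1) := by
  unfold eulerianA W
  refine Finset.sum_congr rfl fun j hj => ?_
  have hji : j ≤ i := Nat.lt_succ_iff.mp (Finset.mem_range.mp hj)
  rw [Nat.cast_sub hji]
  push_cast
  ring

/-- The Eulerian recurrence `A(n+1,m+1) = (m+1)A(n,m+1) + (n+1-m)A(n,m)`. -/
private lemma eulerianA_rec (n M : ℕ) :
    eulerianA (n + 1) (M + 1)
      = ((M : ℤ) + 1) * eulerianA n (M + 1) + ((n : ℤ) + 1 - M) * eulerianA n M := by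
  rw [eulerianA_eq_W, eulerianA_eq_W, eulerianA_eq_W]
  rw [K2 (n + 1) n (M + 1), K1 (n + 1) n (M + 1)]
  push_cast
  ring

private lemma eulerianA_zero (n : ℕ) (hn : 1 ≤ n) : eulerianA n 0 = 0 := by
  unfold eulerianA
  simp [zero_pow (by omega : n ≠ 0)]

private lemma eulerianA_eq_zero_of_gt (n : ℕ) : ∀ i : ℕ, n + 1 ≤ i → eulerianA n i = 0 := by
  induction n with
  | zero =>
    intro i hi
    induction i with
    | zero => omega
    | succ m ih =>
      rcases Nat.eq_or_lt_of_le hi with h | h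
      · have : m = 0 := by omega
        subst this
        simp only [eulerianA]
        norm_num [Finset.sum_range_succ]
      · have hm : eulerianA 0 m = 0 := ih (by omega)
        unfold eulerianA at hm ⊢
        rw [Finset.sum_range_succ]
        rw [show (0:ℕ) + 1 = 1 from rfl] at *
        have : (Nat.choose 1 (m+1) : ℤ) = 0 := by
          norm_cast
          exact Nat.choose_eq_zero_of_lt (by omega)
        simp only [this, pow_zero, mul_one, mul_zero, zero_mul, add_zero]
        rw [← hm]
        refine Finset.sum_congr rfl fun j _ => ?_
        simp
  | succ n ih =>
    intro i hi
    obtain ⟨M, rfl⟩ : ∃ M, i = M + 1 := ⟨i - 1, by omega⟩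
    rw [eulerianA_rec]
    rw [ih (M+1) (by omega), ih M (by omega)]
    ring

private lemma binid (k n i : ℕ) (hi : i < n) :
    ((k : ℤ) + 1) * ((k + n - i).choose n : ℤ)
      = ((i : ℤ) + 1) * ((k + n + 1 - i).choose (n + 1) : ℤ)
        + ((n : ℤ) - (i : ℤ)) * ((k + n - i).choose (n + 1) : ℤ) := by
  set a := k + n - i with ha
  have h1 : k + n + 1 - i = a + 1 := by omega
  rw [h1]
  have hk : (k : ℤ) = (a : ℤ) + i - n := by omega
  have f1 : ((a : ℤ) + 1) * (a.choose n : ℤ) = ((n : ℤ) + 1) * ((a + 1).choose (n + 1) : ℤ) := by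
    have h := Nat.add_one_mul_choose_eq a n
    have h2 : (((a + 1) * a.choose n : ℕ) : ℤ) = (((a + 1).choose (n + 1) * (n + 1) : ℕ) : ℤ) := by
      exact_mod_cast congrArg (Nat.cast : ℕ → ℤ) h
    push_cast at h2
    linarith
  have f2 : ((n : ℤ) + 1) * (a.choose (n + 1) : ℤ) = ((a : ℤ) - n) * (a.choose n : ℤ) := by
    rcases le_or_gt n a with h | h
    · have hh := Nat.choose_succ_right_eq a n
      have h2 : ((a.choose (n + 1) * (n + 1) : ℕ) : ℤ) = ((a.choose n * (a - n) : ℕ) : ℤ) := by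
        exact_mod_cast congrArg (Nat.cast : ℕ → ℤ) hh
      push_cast [Nat.cast_sub h] at h2
      linarith
    · rw [Nat.choose_eq_zero_of_lt h, Nat.choose_eq_zero_of_lt (by omega)]
      simp
  have hne : ((n : ℤ) + 1) ≠ 0 := by positivity
  apply mul_left_cancel₀ hne
  rw [hk]
  linear_combination ((i : ℤ) + 1) * f1 - ((n : ℤ) - i) * f2

/-- The h*-vector of `(k+1)^n` has entries `A(n,i+1)`:
`(k+1)^n = Σ_{i=0}^{n-1} A(n,i+1) · C(k+n-i, n)` (the term `i = n` vanishes
since `A(n,n+1) = 0`). -/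
theorem hstar_succ_pow_eq_eulerian (n : ℕ) (hn : 1 ≤ n) (k : ℕ) :
    ((k : ℤ) + 1) ^ n =
      ∑ i ∈ Finset.range n, eulerianA n (i + 1) * ((k + n - i).choose n : ℤ) := by
  induction n, hn using Nat.le_induction with
  | base =>
    simp only [Finset.sum_range_one, Nat.sub_zero, Nat.choose_one_right]
    simp only [eulerianA]
    norm_num [Finset.sum_range_succ]
  | succ n hn ih =>
    have hA1 : eulerianA n (n + 1) = 0 := eulerianA_eq_zero_of_gt n (n + 1) le_rfl
    have hA0 : eulerianA n 0 = 0 := eulerianA_zero n hn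
    have key : ∑ i ∈ Finset.range (n + 1), eulerianA (n + 1) (i + 1) * ((k + (n + 1) - i).choose (n + 1) : ℤ)
        = (∑ i ∈ Finset.range (n + 1), ((i : ℤ) + 1) * eulerianA n (i + 1) * ((k + n + 1 - i).choose (n + 1) : ℤ))
          + ∑ i ∈ Finset.range (n + 1), ((n : ℤ) + 1 - i) * eulerianA n i * ((k + n + 1 - i).choose (n + 1) : ℤ) := by
      rw [← Finset.sum_add_distrib]
      refine Finset.sum_congr rfl fun i _ => ?_
      rw [eulerianA_rec n i]
      ring
    rw [key, Finset.sum_range_succ, hA1,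
       Finset.sum_range_succ' (fun i => ((n : ℤ) + 1 - i) * eulerianA n i * ((k + n + 1 - i).choose (n + 1) : ℤ)) n]
    simp only [hA0, mul_zero, zero_mul, add_zero, Nat.cast_zero, Nat.cast_ofNat, Nat.cast_add,
      Nat.cast_one]
    rw [← Finset.sum_add_distrib]
    have step : ∀ i ∈ Finset.range n,
        (((i : ℤ) + 1) * eulerianA n (i + 1) * ((k + n + 1 - i).choose (n + 1) : ℤ)
          + ((n : ℤ) + 1 - ((i : ℤ) + 1)) * eulerianA n (i + 1) * ((k + n + 1 - (i + 1)).choose (n + 1) : ℤ))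
        = ((k : ℤ) + 1) * (eulerianA n (i + 1) * ((k + n - i).choose n : ℤ)) := by
      intro i hi
      have hi' : i < n := Finset.mem_range.mp hi
      have h1 : k + n + 1 - (i + 1) = k + n - i := by omega
      rw [h1]
      linear_combination (-(eulerianA n (i + 1))) * binid k n i hi'
    rw [Finset.sum_congr rfl step, ← Finset.mul_sum, ← ih]
    ring
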